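/- Every non-empty finite simple graph G containing no induced 3-wheel has a vertex whose neighborhood induces a disjoint union of cliques (equivalently, a P₃-free graph). -/

import Mathlib

open SimpleGraph

/-- `G` contains a 3-wheel: there is a hole (an induced cycle of length at least 4,
given by a graph embedding of `cycleGraph n` into `G`) and a vertex `v` off the hole
adjacent to three consecutive vertices of the hole. -/
def ContainsThreeWheel {V : Type*} (G : SimpleGraph V) : Prop :=
  ∃ (n : ℕ), 4 ≤ n ∧ ∃ (e : SimpleGraph.cycleGraph n ↪g G) (v : V),
    (∀ i : Fin n, v ≠ e i) ∧
    ∃ i j k : Fin n, (SimpleGraph.cycleGraph n).Adj i j ∧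
      (SimpleGraph.cycleGraph n).Adj j k ∧ i ≠ k ∧
      G.Adj v (e i) ∧ G.Adj v (e j) ∧ G.Adj v (e k)

namespace Stmt9Aux

variable {V : Type*} {G : SimpleGraph V}

/-- adjacency characterisation in the cycle graph -/
lemma cycAdjChar {n : ℕ} (hn : 2 ≤ n) (i j : Fin n) :
    (cycleGraph n).Adj i j ↔
      (i.val + 1 = j.val ∨ j.val + 1 = i.val ∨ (i.val = 0 ∧ j.val + 1 = n) ∨
        (j.val = 0 ∧ i.val + 1 = n)) := by
  have key : ∀ a b : ℕ, a < n → b < n →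
      ((n - b + a) % n = 1 ↔ (b + 1 = a ∨ (a = 0 ∧ b + 1 = n))) := by
    intro a b ha hb
    rcases le_or_gt n (n - b + a) with h | h
    · have e1 : (n - b + a) % n = n - b + a - n := by
        rw [Nat.mod_eq_sub_mod h]
        exact Nat.mod_eq_of_lt (by omega)
      rw [e1]
      constructor
      · intro h2; omega
      · rintro (h2 | ⟨h2a, h2b⟩) <;> omega
    · rw [Nat.mod_eq_of_lt h]
      constructor
      · intro h2; omega
      · rintro (h2 | ⟨h2a, h2b⟩) <;> omega
  have h1 : (i - j).val = (n - j.val + i.val) % n := by rw [Fin.sub_def]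
  have h2 : (j - i).val = (n - i.val + j.val) % n := by rw [Fin.sub_def]
  rw [SimpleGraph.cycleGraph_adj', h1, h2, key i.val j.val i.isLt j.isLt,
    key j.val i.val j.isLt i.isLt]
  tauto

lemma takeGetLast {l : List V} {i : ℕ} (hi : i < l.length) :
    (l.take (i+1)).getLast? = some (l.get ⟨i, hi⟩) := by
  rw [← List.take_concat_get hi, List.concat_eq_append, List.getLast?_concat]
  rfl

lemma chainSplice {l : List V} (hc : l.Chain' G.Adj) {i j : ℕ} (hi : i < l.length)
    (hj : j ≤ l.length)
    (hadj : ∀ h : j < l.length, G.Adj (l.get ⟨i, hi⟩) (l.get ⟨j, h⟩)) :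
    (l.take (i+1) ++ l.drop j).Chain' G.Adj := by
  refine List.isChain_append.mpr ?_
  refine ⟨List.IsChain.infix hc (List.take_prefix (i+1) l).isInfix,
    List.IsChain.infix hc (List.drop_suffix j l).isInfix, ?_⟩
  intro x hx y hy
  rcases lt_or_ge j l.length with hj' | hj'
  · rw [List.head?_drop, List.getElem?_eq_getElem hj'] at hy
    rw [takeGetLast hi] at hx
    rw [Option.mem_some_iff] at hx hy
    subst hx; subst hy
    exact hadj hj'
  · rw [List.head?_drop, List.getElem?_eq_none hj'] at hy
    simp at hy


lemma goodList (G : SimpleGraph V) (A : Set V) (a b : V) (hne : a ≠ b) (hnadj : ¬ G.Adj a b)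
    (hex : ∃ p : G.Walk a b, ∀ z ∈ p.support, z ∈ A) :
    ∃ l : List V, l.Chain' G.Adj ∧ (∀ z ∈ l, z ∈ A) ∧ l.head? = some a ∧ l.getLast? = some b ∧
      3 ≤ l.length ∧ l.Nodup ∧
      ∀ (i j : ℕ) (hi : i < l.length) (hj : j < l.length), i + 2 ≤ j →
        ¬ G.Adj (l.get ⟨i, hi⟩) (l.get ⟨j, hj⟩) := by
  classical
  have hPex : ∃ n : ℕ, ∃ l : List V,
      (l.Chain' G.Adj ∧ (∀ z ∈ l, z ∈ A) ∧ l.head? = some a ∧ l.getLast? = some b) ∧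
      l.length = n := by
    obtain ⟨p, hp⟩ := hex
    refine ⟨p.support.length, p.support, ⟨p.isChain_adj_support, hp, ?_, ?_⟩, rfl⟩
    · rw [p.support_eq_cons]; rfl
    · rw [List.getLast?_eq_head?_reverse, ← SimpleGraph.Walk.support_reverse,
        p.reverse.support_eq_cons]; rfl
  obtain ⟨l, hPl, hlenl⟩ := Nat.find_spec hPex
  obtain ⟨hchain, hmem, hhead, hlast⟩ := hPl
  have hmin : ∀ l' : List V, l'.Chain' G.Adj → (∀ z ∈ l', z ∈ A) → l'.head? = some a →
      l'.getLast? = some b → l.length ≤ l'.length := by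
    intro l' h1 h2 h3 h4
    rw [hlenl]
    exact Nat.find_min' hPex ⟨l', ⟨h1, h2, h3, h4⟩, rfl⟩
  have hlne : l ≠ [] := by rintro rfl; simp at hhead
  have hlen0 : 0 < l.length := List.length_pos_iff.mpr hlne
  have hgetlast : ∀ h : l.length - 1 < l.length, l.get ⟨l.length - 1, h⟩ = b := by
    intro h
    have h2 : b = l.getLast hlne :=
      Option.some.inj (hlast.symm.trans (List.getLast?_eq_getLast hlne))
    rw [h2, List.getLast_eq_getElem]; rfl
  have hget0 : ∀ h : 0 < l.length, l.get ⟨0, h⟩ = a := by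
    intro h
    have h2 : a = l.head hlne := Option.some.inj (hhead.symm.trans (List.head?_eq_head hlne))
    rw [h2, List.get_mk_zero]
  have splice : ∀ (i jj : ℕ) (hi : i < l.length) (hjj : jj ≤ l.length),
      i + 1 + (l.length - jj) < l.length →
      (∀ h : jj < l.length, G.Adj (l.get ⟨i, hi⟩) (l.get ⟨jj, h⟩)) →
      (jj = l.length → l.get ⟨i, hi⟩ = b) → False := by
    intro i jj hi hjj hlt hadj hlastcase
    set l' := l.take (i+1) ++ l.drop jj with hl'
    have hchain' : l'.Chain' G.Adj := chainSplice hchain hi hjj hadj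
    have hmem' : ∀ z ∈ l', z ∈ A := by
      intro z hz
      rcases List.mem_append.mp hz with h | h
      · exact hmem z (List.mem_of_mem_take h)
      · exact hmem z (List.mem_of_mem_drop h)
    have hhead' : l'.head? = some a := by
      have ht : (l.take (i+1)).head? = some a := by
        cases l with
        | nil => exact absurd rfl hlne
        | cons x t => simpa [List.take_succ_cons] using hhead
      rw [hl', List.head?_append, ht]
      rfl
    have hlast' : l'.getLast? = some b := by
      rcases lt_or_eq_of_le hjj with hjj' | hjj'
      · have hne' : l.drop jj ≠ [] := by
          apply List.ne_nil_of_length_pos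
          rw [List.length_drop]; omega
        have hd : (l.drop jj).getLast? = some b := by
          have e2 : l.getLast? = (l.drop jj).getLast?.or (l.take jj).getLast? := by
            conv_lhs => rw [← List.take_append_drop jj l]
            exact List.getLast?_append
          rw [hlast, List.getLast?_eq_getLast hne'] at e2
          rw [List.getLast?_eq_getLast hne']
          exact e2.symm.trans rfl
        rw [hl', List.getLast?_append, hd]
        rfl
      · have hdrop : l.drop jj = [] := by rw [hjj']; exact List.drop_length
        rw [hl', hdrop, List.append_nil, takeGetLast hi, hlastcase hjj']
    have hlen' : l'.length < l.length := by
      rw [hl', List.length_append, List.length_take, List.length_drop]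
      have hm : (i+1) ⊓ l.length = i + 1 := min_eq_left (by omega)
      rw [hm]
      omega
    exact absurd (hmin l' hchain' hmem' hhead' hlast') (by omega)
  have hnodup : l.Nodup := by
    by_contra hnd
    have hni : ¬ Function.Injective l.get := fun hinj => hnd (List.nodup_iff_injective_get.mpr hinj)
    obtain ⟨⟨i, hi⟩, ⟨j, hj⟩, heq, hne'⟩ := Function.not_injective_iff.mp hni
    have main : ∀ (i j : ℕ) (hi : i < l.length) (hj : j < l.length), i < j →
        l.get ⟨i, hi⟩ = l.get ⟨j, hj⟩ → False := by
      intro i j hi hj hij heq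
      refine splice i (j+1) hi (by omega) (by omega) ?_ ?_
      · intro h
        have hadj : G.Adj (l.get ⟨j, hj⟩) (l.get ⟨j+1, h⟩) :=
          List.isChain_iff_getElem.mp hchain j (by omega)
        rw [heq]; exact hadj
      · intro h
        have hj' : j = l.length - 1 := by omega
        subst hj'
        rw [heq]
        exact hgetlast hj
    rcases lt_trichotomy i j with h | h | h
    · exact main i j hi hj h heq
    · exact hne' (Fin.ext h)
    · exact main j i hj hi h heq.symm
  have hchord : ∀ (i j : ℕ) (hi : i < l.length) (hj : j < l.length), i + 2 ≤ j →
      ¬ G.Adj (l.get ⟨i, hi⟩) (l.get ⟨j, hj⟩) := by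
    intro i j hi hj hij hadj
    exact splice i j hi (le_of_lt hj) (by omega) (fun h => hadj) (fun h => absurd h (by omega))
  have hge3 : 3 ≤ l.length := by
    by_contra hlt
    push_neg at hlt
    have h1 : l.length = 1 ∨ l.length = 2 := by omega
    rcases h1 with h1 | h1
    · apply hne
      have ha' := hget0 hlen0
      have hb' := hgetlast (by omega)
      have e : (⟨l.length - 1, by omega⟩ : Fin l.length) = ⟨0, hlen0⟩ := Fin.ext (by simp; omega)
      rw [e] at hb'
      rw [← ha', ← hb']
    · have hadj01 : G.Adj (l.get ⟨0, by omega⟩) (l.get ⟨1, by omega⟩) :=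
        List.isChain_iff_getElem.mp hchain 0 (by omega)
      have ha' := hget0 hlen0
      have hb' := hgetlast (by omega)
      have e : (⟨l.length - 1, by omega⟩ : Fin l.length) = ⟨1, by omega⟩ := Fin.ext (by simp; omega)
      rw [e] at hb'
      rw [ha', hb'] at hadj01
      exact hnadj hadj01
  exact ⟨l, hchain, hmem, hhead, hlast, hge3, hnodup, hchord⟩

lemma buildWheel (G : SimpleGraph V) (v c a b : V) (l : List V)
    (hchain : l.Chain' G.Adj) (hhead : l.head? = some a) (hlast : l.getLast? = some b)
    (hlen : 3 ≤ l.length) (hnodup : l.Nodup)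
    (hchord : ∀ (i j : ℕ) (hi : i < l.length) (hj : j < l.length), i + 2 ≤ j →
      ¬ G.Adj (l.get ⟨i, hi⟩) (l.get ⟨j, hj⟩))
    (hva : G.Adj v a) (hvb : G.Adj v b)
    (hvmid : ∀ (i : ℕ) (hi : i < l.length), 0 < i → i + 1 < l.length →
      ¬ G.Adj v (l.get ⟨i, hi⟩))
    (hvl : v ∉ l)
    (hca : G.Adj c a) (hcv : G.Adj c v) (hcb : G.Adj c b) (hcl : c ∉ l) :
    ContainsThreeWheel G := by
  classical
  have hlne : l ≠ [] := by rintro rfl; simp at hlen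
  have hgetlast : ∀ h : l.length - 1 < l.length, l.get ⟨l.length - 1, h⟩ = b := by
    intro h
    have h2 : b = l.getLast hlne :=
      Option.some.inj (hlast.symm.trans (List.getLast?_eq_getLast hlne))
    rw [h2, List.getLast_eq_getElem]; rfl
  have hget0 : ∀ h : 0 < l.length, l.get ⟨0, h⟩ = a := by
    intro h
    have h2 : a = l.head hlne := Option.some.inj (hhead.symm.trans (List.head?_eq_head hlne))
    rw [h2, List.get_mk_zero]
  set L := l.length with hL
  set n := L + 1 with hn
  have hn4 : 4 ≤ n := by omega
  set cyc := v :: l with hcyc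
  have hlc : cyc.length = n := by simp [hcyc, hn, hL]
  set f : Fin n → V := fun i => cyc.get (Fin.cast hlc.symm i) with hf
  have hfval : ∀ (i : Fin n), f i = cyc.get ⟨i.val, by rw [hlc]; exact i.isLt⟩ := by
    intro i; rfl
  have hcynd : cyc.Nodup := List.nodup_cons.mpr ⟨hvl, hnodup⟩
  have finj : Function.Injective f := by
    intro i j hij
    have h2 := List.nodup_iff_injective_get.mp hcynd hij
    exact Fin.ext (by simpa using congrArg Fin.val h2)
  -- get at successor indices
  have gv : ∀ (k : ℕ) (h : k < L) (h' : k + 1 < cyc.length),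
      cyc.get ⟨k + 1, h'⟩ = l.get ⟨k, h⟩ := by
    intro k h h'; rfl
  -- positive adjacency along the cycle
  have hPos : ∀ (p q : ℕ) (hp : p < cyc.length) (hq : q < cyc.length), p + 1 = q →
      G.Adj (cyc.get ⟨p, hp⟩) (cyc.get ⟨q, hq⟩) := by
    intro p q hp hq hpq
    subst hpq
    cases p with
    | zero =>
      have h0 : (0 : ℕ) < L := by omega
      rw [show (cyc.get ⟨0, hp⟩) = v from rfl, gv 0 h0 hq, hget0 h0]
      exact hva
    | succ k =>
      have hk1 : k + 1 < L := by
        have := hq; rw [hlc] at this; omega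
      have hk : k < L := by omega
      rw [gv k hk hp, gv (k+1) hk1 hq]
      exact List.isChain_iff_getElem.mp hchain k (by omega)
  have hWrap : ∀ (hp : 0 < cyc.length) (hq : n - 1 < cyc.length),
      G.Adj (cyc.get ⟨n - 1, hq⟩) (cyc.get ⟨0, hp⟩) := by
    intro hp hq
    have hL1 : L - 1 < L := by omega
    have e1 : cyc.get ⟨n - 1, hq⟩ = l.get ⟨L - 1, hL1⟩ := by
      have : n - 1 = (L - 1) + 1 := by omega
      rw [show (⟨n - 1, hq⟩ : Fin cyc.length) = ⟨(L-1)+1, by rw [hlc]; omega⟩ from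
        Fin.ext (by simp; omega)]
      exact gv (L-1) hL1 _
    rw [e1, hgetlast hL1, show (cyc.get ⟨0, hp⟩) = v from rfl]
    exact hvb.symm
  -- negative adjacency
  have hNon : ∀ (p q : ℕ) (hp : p < cyc.length) (hq : q < cyc.length), p < q → p + 1 ≠ q →
      ¬(p = 0 ∧ q + 1 = n) → ¬ G.Adj (cyc.get ⟨p, hp⟩) (cyc.get ⟨q, hq⟩) := by
    intro p q hp hq hpq hnsucc hnwrap
    have hqn : q < n := by rw [← hlc]; exact hq
    cases p with
    | zero =>
      have hq1 : q - 1 < L := by omega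
      have e1 : cyc.get ⟨q, hq⟩ = l.get ⟨q - 1, hq1⟩ := by
        rw [show (⟨q, hq⟩ : Fin cyc.length) = ⟨(q-1)+1, by rw [hlc]; omega⟩ from
          Fin.ext (by simp; omega)]
        exact gv (q-1) hq1 _
      rw [e1, show (cyc.get ⟨0, hp⟩) = v from rfl]
      apply hvmid
      · omega
      · have : q + 1 ≠ n := fun hc => hnwrap ⟨rfl, hc⟩
        omega
    | succ k =>
      have hk : k < L := by omega
      have hq1 : q - 1 < L := by omega
      have e1 : cyc.get ⟨q, hq⟩ = l.get ⟨q - 1, hq1⟩ := by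
        rw [show (⟨q, hq⟩ : Fin cyc.length) = ⟨(q-1)+1, by rw [hlc]; omega⟩ from
          Fin.ext (by simp; omega)]
        exact gv (q-1) hq1 _
      rw [e1, gv k hk hp]
      exact hchord k (q-1) hk hq1 (by omega)
  -- the embedding
  have hmapiff : ∀ (i j : Fin n), G.Adj (f i) (f j) ↔ (cycleGraph n).Adj i j := by
    intro i j
    rw [cycAdjChar (by omega) i j, hfval i, hfval j]
    constructor
    · intro hadj
      rcases lt_trichotomy i.val j.val with h | h | h
      · by_cases hsucc : i.val + 1 = j.val
        · exact Or.inl hsucc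
        · by_cases hwrap : i.val = 0 ∧ j.val + 1 = n
          · exact Or.inr (Or.inr (Or.inl hwrap))
          · exact absurd hadj (hNon i.val j.val _ _ h hsucc hwrap)
      · exfalso
        have e : (⟨i.val, by rw [hlc]; exact i.isLt⟩ : Fin cyc.length) =
            ⟨j.val, by rw [hlc]; exact j.isLt⟩ := Fin.ext (by simpa using h)
        rw [e] at hadj
        exact G.loopless.irrefl _ hadj
      · by_cases hsucc : j.val + 1 = i.val
        · exact Or.inr (Or.inl hsucc)
        · by_cases hwrap : j.val = 0 ∧ i.val + 1 = n
          · exact Or.inr (Or.inr (Or.inr hwrap))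
          · exact absurd hadj.symm (hNon j.val i.val _ _ h hsucc hwrap)
    · intro hrel
      rcases hrel with h | h | ⟨h1, h2⟩ | ⟨h1, h2⟩
      · exact hPos i.val j.val _ _ h
      · exact (hPos j.val i.val _ _ h).symm
      · have e : j.val = n - 1 := by omega
        have := hWrap (by rw [hlc]; omega) (by rw [hlc]; omega)
        rw [show (⟨i.val, by rw [hlc]; exact i.isLt⟩ : Fin cyc.length) = ⟨0, by rw [hlc]; omega⟩
          from Fin.ext (by simpa using h1),
          show (⟨j.val, by rw [hlc]; exact j.isLt⟩ : Fin cyc.length) = ⟨n-1, by rw [hlc]; omega⟩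
          from Fin.ext (by simpa using e)]
        exact this.symm
      · have e : i.val = n - 1 := by omega
        have := hWrap (by rw [hlc]; omega) (by rw [hlc]; omega)
        rw [show (⟨j.val, by rw [hlc]; exact j.isLt⟩ : Fin cyc.length) = ⟨0, by rw [hlc]; omega⟩
          from Fin.ext (by simpa using h1),
          show (⟨i.val, by rw [hlc]; exact i.isLt⟩ : Fin cyc.length) = ⟨n-1, by rw [hlc]; omega⟩
          from Fin.ext (by simpa using e)]
        exact this
  refine ⟨n, hn4, ⟨⟨f, finj⟩, @fun i j => hmapiff i j⟩, c, ?_, ⟨1, by omega⟩, ⟨0, by omega⟩,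
    ⟨n-1, by omega⟩, ?_, ?_, ?_, ?_, ?_, ?_⟩
  · intro i hci
    have hmem : c ∈ cyc := by
      rw [hci]
      simp only [RelEmbedding.coe_mk, Function.Embedding.coeFn_mk]
      exact List.get_mem _ _
    rcases List.mem_cons.mp hmem with h | h
    · exact G.ne_of_adj hcv h
    · exact hcl h
  · rw [cycAdjChar (by omega)]
    right; left; simp
  · rw [cycAdjChar (by omega)]
    right; right; left
    constructor
    · simp
    · show n - 1 + 1 = n
      omega
  · intro hik
    have h2 : (1 : ℕ) = n - 1 := congrArg Fin.val hik
    omega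
  · show G.Adj c (f ⟨1, by omega⟩)
    rw [hfval]
    have h0 : (0 : ℕ) < L := by omega
    rw [show (⟨(⟨1, by omega⟩ : Fin n).val, _⟩ : Fin cyc.length) = ⟨0+1, by rw [hlc]; omega⟩ from
      Fin.ext (by simp), gv 0 h0 _, hget0 h0]
    exact hca
  · show G.Adj c (f ⟨0, by omega⟩)
    rw [hfval]
    exact hcv
  · show G.Adj c (f ⟨n-1, by omega⟩)
    rw [hfval]
    have hL1 : L - 1 < L := by omega
    rw [show (⟨(⟨n-1, by omega⟩ : Fin n).val, _⟩ : Fin cyc.length) = ⟨(L-1)+1, by rw [hlc]; omega⟩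
      from Fin.ext (by simp; omega), gv (L-1) hL1 _, hgetlast hL1]
    exact hcb

/-- Connectivity within a vertex set. -/
def ConnOn (G : SimpleGraph V) (A : Finset V) (x y : V) : Prop :=
  ∃ p : G.Walk x y, ∀ z ∈ p.support, z ∈ A

lemma connOn_refl {A : Finset V} {x : V} (hx : x ∈ A) : ConnOn G A x x :=
  ⟨SimpleGraph.Walk.nil, by
    intro z hz
    simp only [SimpleGraph.Walk.support_nil, List.mem_singleton] at hz
    subst hz; exact hx⟩

lemma connOn_symm {A : Finset V} {x y : V} (h : ConnOn G A x y) : ConnOn G A y x := by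
  obtain ⟨p, hp⟩ := h
  refine ⟨p.reverse, ?_⟩
  intro z hz
  rw [SimpleGraph.Walk.support_reverse, List.mem_reverse] at hz
  exact hp z hz

lemma connOn_trans {A : Finset V} {x y z : V} (h1 : ConnOn G A x y) (h2 : ConnOn G A y z) :
    ConnOn G A x z := by
  obtain ⟨p, hp⟩ := h1
  obtain ⟨q, hq⟩ := h2
  refine ⟨p.append q, ?_⟩
  intro w hw
  rw [SimpleGraph.Walk.support_append] at hw
  rcases List.mem_append.mp hw with h | h
  · exact hp w h
  · exact hq w (List.mem_of_mem_tail h)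

lemma connOn_adj {A : Finset V} {x y : V} (hx : x ∈ A) (hy : y ∈ A) (hadj : G.Adj x y) :
    ConnOn G A x y := by
  refine ⟨SimpleGraph.Walk.cons hadj SimpleGraph.Walk.nil, ?_⟩
  intro z hz
  simp only [SimpleGraph.Walk.support_cons, SimpleGraph.Walk.support_nil, List.mem_cons,
    List.mem_singleton, List.not_mem_nil, or_false] at hz
  rcases hz with rfl | rfl
  exacts [hx, hy]

/-- `v` is amiable within `U`: any two nonadjacent neighbours (inside `U`) attach to a
common connected piece of `U` outside the closed neighbourhood of `v`. -/
def AmiableOn (G : SimpleGraph V) (U : Finset V) (v : V) : Prop :=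
  ∀ a b : V, a ∈ U → b ∈ U → G.Adj v a → G.Adj v b → ¬G.Adj a b → a ≠ b →
    ∃ W : Finset V, W ⊆ U ∧ (∀ w ∈ W, ¬ G.Adj v w ∧ w ≠ v) ∧
      (∀ w ∈ W, ∀ w' ∈ W, ConnOn G W w w') ∧ (∃ w ∈ W, G.Adj a w) ∧ (∃ w ∈ W, G.Adj b w)

lemma lemA (G : SimpleGraph V) : ∀ (m k : ℕ) (U C : Finset V) (t : V),
    U.card ≤ m → C.card ≤ k → C ⊆ U → C.Nonempty → t ∈ U → t ∉ C →
    (∀ y ∈ C, ¬ G.Adj t y) →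
    (∀ x ∈ U, x ∉ C → (∃ y ∈ C, G.Adj x y) → G.Adj t x) →
    ∃ v ∈ C, AmiableOn G U v := by
  intro m
  induction m using Nat.strong_induction_on with
  | _ m ihm =>
    intro k
    induction k using Nat.strong_induction_on with
    | _ k ihk =>
      intro U C t hUm hCk hCU hCne htU htC htnadj hbound
      classical
      set S : Finset V := U.filter (fun x => x ∉ C ∧ ∃ y ∈ C, G.Adj x y) with hS
      by_cases hR : U ⊆ C ∪ S ∪ {t}
      · -- everything is close to `C`; find the minimizer `c₀`
        obtain ⟨c₀, hc₀C, hc₀min⟩ := Finset.exists_min_image C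
          (fun x => (insert x (U.filter (fun y => G.Adj x y))).card) hCne
        set N₀ : Finset V := insert c₀ (U.filter (fun y => G.Adj c₀ y)) with hN₀
        set D : Finset V := U \ N₀ with hD
        have hmemD : ∀ z, z ∈ D ↔ z ∈ U ∧ z ≠ c₀ ∧ ¬ G.Adj c₀ z := by
          intro z
          rw [hD, Finset.mem_sdiff, hN₀, Finset.mem_insert, Finset.mem_filter]
          constructor
          · rintro ⟨h1, h2⟩
            exact ⟨h1, fun hc => h2 (Or.inl hc), fun hc => h2 (Or.inr ⟨h1, hc⟩)⟩
          · rintro ⟨h1, h2, h3⟩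
            refine ⟨h1, fun hc => ?_⟩
            rcases hc with hc | hc
            · exact h2 hc
            · exact h3 hc.2
        have htD : t ∈ D := (hmemD t).mpr
          ⟨htU, fun hc => htC (hc ▸ hc₀C), fun hc => htnadj c₀ hc₀C hc.symm⟩
        by_cases hEx : ∃ x, x ∈ D ∧ x ∈ C ∧ ∀ z ∈ D, ConnOn G D x z → z ∈ C
        · -- a component of `D` trapped inside `C`: recurse on it
          obtain ⟨x, hxD, hxC, hxcomp⟩ := hEx
          set E : Finset V := D.filter (fun z => ConnOn G D x z) with hE
          have hED : E ⊆ D := Finset.filter_subset _ _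
          have hEC : E ⊆ C := by
            intro z hz
            rw [hE, Finset.mem_filter] at hz
            exact hxcomp z hz.1 hz.2
          have hxE : x ∈ E := by
            rw [hE, Finset.mem_filter]
            exact ⟨hxD, connOn_refl hxD⟩
          have hc₀E : c₀ ∉ E := fun hc => ((hmemD c₀).mp (hED hc)).2.1 rfl
          have hcardE : E.card < C.card :=
            Finset.card_lt_card ⟨hEC, fun hsub => hc₀E (hsub hc₀C)⟩
          have hmain := ihk E.card (by omega) U E c₀ hUm le_rfl
            (fun z hz => ((hmemD z).mp (hED hz)).1) ⟨x, hxE⟩ (hCU hc₀C) hc₀E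
            (fun y hy => ((hmemD y).mp (hED hy)).2.2) ?_
          · obtain ⟨v, hvE, hvAmi⟩ := hmain
            exact ⟨v, hEC hvE, hvAmi⟩
          · intro y hyU hyE hyadj
            obtain ⟨z, hzE, hyz⟩ := hyadj
            by_cases hyD : y ∈ D
            · exfalso
              apply hyE
              rw [hE, Finset.mem_filter]
              have hzD : z ∈ D := hED hzE
              have hxz : ConnOn G D x z := by
                rw [hE, Finset.mem_filter] at hzE
                exact hzE.2
              exact ⟨hyD, connOn_trans hxz (connOn_adj hzD hyD hyz.symm)⟩
            · have hyN : y ∈ N₀ := by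
                by_contra hyN
                exact hyD ((hmemD y).mpr ⟨hyU, by
                  rw [hD, Finset.mem_sdiff] at *
                  exact (fun hc => hyN (hc ▸ Finset.mem_insert_self c₀ _)),
                  fun hc => hyN (Finset.mem_insert_of_mem (Finset.mem_filter.mpr ⟨hyU, hc⟩))⟩)
              rcases Finset.mem_insert.mp hyN with rfl | hyN
              · exfalso
                exact ((hmemD z).mp (hED hzE)).2.2 hyz
              · exact (Finset.mem_filter.mp hyN).2
        · -- otherwise `D` is entirely connected through `t`, and `c₀` is amiable
          have hDt : ∀ x ∈ D, ConnOn G D x t := by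
            intro x hxD
            have hxU : x ∈ U := ((hmemD x).mp hxD).1
            rcases Finset.mem_union.mp (hR hxU) with hx1 | hxt
            rcases Finset.mem_union.mp hx1 with hxC | hxS
            · -- x ∈ C : its component escapes C
              have hesc : ∃ z ∈ D, ConnOn G D x z ∧ z ∉ C := by
                by_contra hcc
                push_neg at hcc
                exact hEx ⟨x, hxD, hxC, hcc⟩
              obtain ⟨z, hzD, hconn, hzC⟩ := hesc
              have hzU : z ∈ U := ((hmemD z).mp hzD).1
              rcases Finset.mem_union.mp (hR hzU) with hz1 | hzt
              rcases Finset.mem_union.mp hz1 with hzC' | hzS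
              · exact absurd hzC' hzC
              · -- z ∈ S, hence adjacent to t
                have hzadj : G.Adj t z := by
                  apply hbound z hzU hzC
                  exact (Finset.mem_filter.mp hzS).2.2
                exact connOn_trans hconn (connOn_adj hzD htD hzadj.symm)
              · rw [Finset.mem_singleton] at hzt
                exact hzt ▸ hconn
            · -- x ∈ S
              have hxadj : G.Adj t x := by
                apply hbound x hxU (Finset.mem_filter.mp hxS).2.1
                exact (Finset.mem_filter.mp hxS).2.2
              exact connOn_adj hxD htD hxadj.symm
            · rw [Finset.mem_singleton] at hxt
              subst hxt
              exact connOn_refl hxD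
          refine ⟨c₀, hc₀C, ?_⟩
          intro a b haU hbU hva hvb hnab hne
          have hfind : ∀ e e' : V, e ∈ U → e' ∈ U → G.Adj c₀ e → G.Adj c₀ e' → ¬ G.Adj e e' →
              e ≠ e' → ∃ w ∈ D, G.Adj e w := by
            intro e e' heU he'U hce hce' hnee hneee
            by_cases hw : ∃ w ∈ D, G.Adj e w
            · exact hw
            · push_neg at hw
              exfalso
              rcases Finset.mem_union.mp (hR heU) with he1 | het
              rcases Finset.mem_union.mp he1 with heC | heS
              · -- e ∈ C : minimality gives N(e) = N₀, contradiction with e' nonadjacent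
                have hsub : insert e (U.filter (fun y => G.Adj e y)) ⊆ N₀ := by
                  intro f hf
                  rcases Finset.mem_insert.mp hf with rfl | hf
                  · exact Finset.mem_insert_of_mem (Finset.mem_filter.mpr ⟨heU, hce⟩)
                  · obtain ⟨hfU, hef⟩ := Finset.mem_filter.mp hf
                    by_contra hfN
                    exact hw f ((hmemD f).mpr ⟨hfU,
                      fun hc => hfN (hc ▸ Finset.mem_insert_self c₀ _),
                      fun hc => hfN (Finset.mem_insert_of_mem
                        (Finset.mem_filter.mpr ⟨hfU, hc⟩))⟩) hef
                have heqN : insert e (U.filter (fun y => G.Adj e y)) = N₀ :=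
                  Finset.eq_of_subset_of_card_le hsub (hc₀min e heC)
                have he'N : e' ∈ N₀ :=
                  Finset.mem_insert_of_mem (Finset.mem_filter.mpr ⟨he'U, hce'⟩)
                rw [← heqN] at he'N
                rcases Finset.mem_insert.mp he'N with h | h
                · exact hneee h.symm
                · exact hnee (Finset.mem_filter.mp h).2
              · -- e ∈ S : t is a neighbour of e inside D
                have headj : G.Adj t e := by
                  apply hbound e heU (Finset.mem_filter.mp heS).2.1
                  exact (Finset.mem_filter.mp heS).2.2
                exact hw t htD headj.symm
              · rw [Finset.mem_singleton] at het
                exact ((hmemD t).mp htD).2.2 (het ▸ hce)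
          obtain ⟨wa, hwaD, hawa⟩ := hfind a b haU hbU hva hvb hnab hne
          obtain ⟨wb, hwbD, hbwb⟩ := hfind b a hbU haU hvb hva (fun hc => hnab hc.symm) hne.symm
          refine ⟨D, Finset.sdiff_subset, ?_, ?_, ⟨wa, hwaD, hawa⟩, ⟨wb, hwbD, hbwb⟩⟩
          · intro w hwD
            obtain ⟨_, h2, h3⟩ := (hmemD w).mp hwD
            exact ⟨h3, h2⟩
          · intro w hw w' hw'
            exact connOn_trans (hDt w hw) (connOn_symm (hDt w' hw'))
      · -- recursion on a strictly smaller vertex set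
        obtain ⟨r, hrU, hrn⟩ := Finset.not_subset.mp hR
        set U' : Finset V := C ∪ S ∪ {t} with hU'
        have hU'sub : U' ⊆ U := by
          intro x hx
          rw [hU'] at hx
          rcases Finset.mem_union.mp hx with hx | hx
          · rcases Finset.mem_union.mp hx with hx | hx
            · exact hCU hx
            · exact (Finset.mem_filter.mp hx).1
          · rw [Finset.mem_singleton] at hx
            subst hx
            exact htU
        have hcard : U'.card < U.card :=
          Finset.card_lt_card ⟨hU'sub, fun hc => hrn (hc hrU)⟩
        have hmain := ihm U'.card (by omega) C.card U' C t le_rfl le_rfl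
          (fun x hx => Finset.mem_union_left _ (Finset.mem_union_left _ hx)) hCne
          (Finset.mem_union_right _ (Finset.mem_singleton_self t)) htC htnadj
          (fun x hx => hbound x (hU'sub hx))
        obtain ⟨v, hvC, hvAmi⟩ := hmain
        refine ⟨v, hvC, ?_⟩
        intro a b haU hbU hva hvb hnab hne
        have hmemU' : ∀ e : V, e ∈ U → G.Adj v e → e ∈ U' := by
          intro e heU hve
          by_cases hc : e ∈ C
          · exact Finset.mem_union_left _ (Finset.mem_union_left _ hc)
          · exact Finset.mem_union_left _ (Finset.mem_union_right _
              (Finset.mem_filter.mpr ⟨heU, hc, ⟨v, hvC, hve.symm⟩⟩))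
        obtain ⟨W, hWU', hWnadj, hWconn, hWa, hWb⟩ :=
          hvAmi a b (hmemU' a haU hva) (hmemU' b hbU hvb) hva hvb hnab hne
        exact ⟨W, hWU'.trans hU'sub, hWnadj, hWconn, hWa, hWb⟩

theorem stmt_9' {V : Type*} [Fintype V] [Nonempty V] (G : SimpleGraph V)
    (h : ¬ ContainsThreeWheel G) :
    ∃ v : V, ∀ x y z : V, G.Adj v x → G.Adj v y → G.Adj v z →
      G.Adj x y → G.Adj y z → x ≠ z → G.Adj x z := by
  classical
  by_contra hcon
  push_neg at hcon
  -- pick any vertex and get a nonadjacent pair from its bad neighbourhood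
  obtain ⟨x₀, y₀, z₀, _, _, _, _, _, hne₀, hnadj₀⟩ := hcon (Classical.arbitrary V)
  set N₀ : Finset V := insert x₀ (Finset.univ.filter (fun y => G.Adj x₀ y)) with hN₀
  set D₀ : Finset V := Finset.univ \ N₀ with hD₀
  have hmemD₀ : ∀ z, z ∈ D₀ ↔ z ≠ x₀ ∧ ¬ G.Adj x₀ z := by
    intro z
    rw [hD₀, Finset.mem_sdiff, hN₀, Finset.mem_insert, Finset.mem_filter]
    constructor
    · rintro ⟨_, h2⟩
      exact ⟨fun hc => h2 (Or.inl hc), fun hc => h2 (Or.inr ⟨Finset.mem_univ z, hc⟩)⟩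
    · rintro ⟨h2, h3⟩
      refine ⟨Finset.mem_univ z, fun hc => ?_⟩
      rcases hc with hc | hc
      · exact h2 hc
      · exact h3 hc.2
  have hz₀D : z₀ ∈ D₀ := (hmemD₀ z₀).mpr ⟨fun hc => hne₀ hc.symm, hnadj₀⟩
  set C : Finset V := D₀.filter (fun z => ConnOn G D₀ z₀ z) with hC
  have hCD : C ⊆ D₀ := Finset.filter_subset _ _
  have hCne : C.Nonempty := ⟨z₀, by rw [hC, Finset.mem_filter]; exact ⟨hz₀D, connOn_refl hz₀D⟩⟩
  have hx₀C : x₀ ∉ C := fun hc => ((hmemD₀ x₀).mp (hCD hc)).1 rfl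
  have hbnd : ∀ w ∈ Finset.univ, w ∉ C → (∃ y ∈ C, G.Adj w y) → G.Adj x₀ w := by
    intro w _ hwC hwadj
    obtain ⟨y, hyC, hwy⟩ := hwadj
    by_cases hwD : w ∈ D₀
    · exfalso
      apply hwC
      rw [hC, Finset.mem_filter]
      have hyD : y ∈ D₀ := hCD hyC
      have hzy : ConnOn G D₀ z₀ y := by
        rw [hC, Finset.mem_filter] at hyC
        exact hyC.2
      exact ⟨hwD, connOn_trans hzy (connOn_adj hyD hwD hwy.symm)⟩
    · have hwN : w ∈ N₀ := by
        by_contra hwN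
        exact hwD (Finset.mem_sdiff.mpr ⟨Finset.mem_univ w, hwN⟩)
      rcases Finset.mem_insert.mp hwN with rfl | hwN
      · exact absurd hwy ((hmemD₀ y).mp (hCD hyC)).2
      · exact (Finset.mem_filter.mp hwN).2
  have hlem := lemA G Finset.univ.card C.card Finset.univ C x₀ le_rfl le_rfl
    (fun z _ => Finset.mem_univ z) hCne (Finset.mem_univ x₀) hx₀C
    (fun y hy => ((hmemD₀ y).mp (hCD hy)).2) hbnd
  obtain ⟨v, hvC, hvAmi⟩ := hlem
  -- the bad configuration at `v`
  obtain ⟨a, c, b, hva, hvc, hvb, hac, hcb, hab_ne, hab_nadj⟩ := hcon v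
  obtain ⟨W, hWU, hWnbr, hWconn, ⟨wa, hwaW, hawa⟩, ⟨wb, hwbW, hbwb⟩⟩ :=
    hvAmi a b (Finset.mem_univ a) (Finset.mem_univ b) hva hvb hab_nadj hab_ne
  -- build a walk from a to b through W
  obtain ⟨p₀, hp₀⟩ := hWconn wa hwaW wb hwbW
  set A : Set V := {u | u = a ∨ u = b ∨ u ∈ W} with hA
  have hq : ∃ p : G.Walk a b, ∀ u ∈ p.support, u ∈ A := by
    refine ⟨SimpleGraph.Walk.cons hawa (p₀.concat hbwb.symm), ?_⟩
    intro u hu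
    rw [SimpleGraph.Walk.support_cons] at hu
    rcases List.mem_cons.mp hu with rfl | hu
    · exact Or.inl rfl
    · rw [SimpleGraph.Walk.support_concat] at hu
      rcases List.mem_append.mp hu with hu | hu
      · exact Or.inr (Or.inr (hp₀ u hu))
      · rw [List.mem_singleton] at hu
        exact Or.inr (Or.inl hu)
  obtain ⟨l, hchain, hmemA, hhead, hlast, hlen3, hnodup, hchord⟩ :=
    goodList G A a b hab_ne hab_nadj hq
  have hlne : l ≠ [] := by rintro rfl; simp at hhead
  have hgetlast : ∀ hh : l.length - 1 < l.length, l.get ⟨l.length - 1, hh⟩ = b := by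
    intro hh
    have h2 : b = l.getLast hlne :=
      Option.some.inj (hlast.symm.trans (List.getLast?_eq_getLast hlne))
    rw [h2, List.getLast_eq_getElem]; rfl
  have hget0 : ∀ hh : 0 < l.length, l.get ⟨0, hh⟩ = a := by
    intro hh
    have h2 : a = l.head hlne := Option.some.inj (hhead.symm.trans (List.head?_eq_head hlne))
    rw [h2, List.get_mk_zero]
  have hinj := List.nodup_iff_injective_get.mp hnodup
  have hvmid : ∀ (i : ℕ) (hi : i < l.length), 0 < i → i + 1 < l.length →
      ¬ G.Adj v (l.get ⟨i, hi⟩) := by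
    intro i hi h0 hi1
    have hm := hmemA (l.get ⟨i, hi⟩) (List.get_mem l ⟨i, hi⟩)
    rcases hm with hm | hm | hm
    · exfalso
      have he : l.get ⟨i, hi⟩ = l.get ⟨0, by omega⟩ := hm.trans (hget0 (by omega)).symm
      have := congrArg Fin.val (hinj he)
      simp at this
      omega
    · exfalso
      have he : l.get ⟨i, hi⟩ = l.get ⟨l.length - 1, by omega⟩ :=
        hm.trans (hgetlast (by omega)).symm
      have := congrArg Fin.val (hinj he)
      simp at this
      omega
    · exact (hWnbr _ hm).1
  have hvl : v ∉ l := by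
    intro hv
    rcases hmemA v hv with hm | hm | hm
    · rw [hm] at hva
      exact G.loopless.irrefl a hva
    · rw [hm] at hvb
      exact G.loopless.irrefl b hvb
    · exact (hWnbr v hm).2 rfl
  have hcl : c ∉ l := by
    intro hcmem
    rcases hmemA c hcmem with hm | hm | hm
    · exact (G.ne_of_adj hac) hm.symm
    · exact (G.ne_of_adj hcb) hm
    · exact (hWnbr c hm).1 hvc
  exact h (buildWheel G v c a b l hchain hhead hlast hlen3 hnodup hchord hva hvb hvmid hvl
    hac.symm hvc.symm hcb hcl)

end Stmt9Aux

/-- Chudnovsky: every non-empty 3-wheel-free graph has a vertex whose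
neighborhood induces a disjoint union of cliques, i.e. is `P₃`-free: any two
neighbors of a common vertex of the neighborhood are adjacent. -/


theorem stmt_9 {V : Type*} [Fintype V] [Nonempty V] (G : SimpleGraph V)
    (h : ¬ ContainsThreeWheel G) :
    ∃ v : V, ∀ x y z : V, G.Adj v x → G.Adj v y → G.Adj v z →
      G.Adj x y → G.Adj y z → x ≠ z → G.Adj x z :=
  Stmt9Aux.stmt_9' G h
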